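/- Under the RTT relations with the constant R-matrix in the case a₊=−a₋, the generators satisfy p² = −t², pt = −tp, q² = −s², qs = −sq; equivalently p̃² = t̃² = q̃² = s̃² = 0 where p̃=(p+t)/2, t̃=(p−t)/2, q̃=(q+s)/2, s̃=(q−s)/2. -/
import Mathlib


open Matrix

/-- The 9×9 exotic braid matrix with parameters `a₊, a₋, b₊, b₋, c₊, c₋`. -/
noncomputable def Rhat9 (ap am bp bm cp cm : ℝ) : Matrix (Fin 9) (Fin 9) ℝ :=
  !![ap,0,0,0,0,0,0,0,am;
     0,bp,0,0,0,0,0,bm,0;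
     0,0,ap,0,0,0,am,0,0;
     0,0,0,cp,0,cm,0,0,0;
     0,0,0,0,1,0,0,0,0;
     0,0,0,cm,0,cp,0,0,0;
     0,0,am,0,0,0,ap,0,0;
     0,bm,0,0,0,0,0,bp,0;
     am,0,0,0,0,0,0,0,ap]

/-- Lexicographic identification of `Fin 3 × Fin 3` with `Fin 9`. -/
def enc (p : Fin 3 × Fin 3) : Fin 9 :=
  ⟨3 * p.1.val + p.2.val, by have := p.1.isLt; have := p.2.isLt; omega⟩

/-- The braid matrix reindexed by pairs. -/
noncomputable def RhatP (ap am bp bm cp cm : ℝ) :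
    Matrix (Fin 3 × Fin 3) (Fin 3 × Fin 3) ℝ :=
  fun p q => Rhat9 ap am bp bm cp cm (enc p) (enc q)

/-- The flip permutation `P(e_i ⊗ e_j) = e_j ⊗ e_i`. -/
def Pflip : Matrix (Fin 3 × Fin 3) (Fin 3 × Fin 3) ℝ :=
  fun p q => if p.1 = q.2 ∧ p.2 = q.1 then 1 else 0

/-- The constant R-matrix `R = P·R̂`, with entries viewed in the ℝ-algebra `A`. -/
noncomputable def RmatA (A : Type*) [Ring A] [Algebra ℝ A] (ap am bp bm cp cm : ℝ) :
    Matrix (Fin 3 × Fin 3) (Fin 3 × Fin 3) A :=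
  (Pflip * RhatP ap am bp bm cp cm).map (algebraMap ℝ A)

/-- `T₁ = T ⊗ I₃` over the algebra `A`. -/
def T1 {A : Type*} [Ring A] (T : Matrix (Fin 3) (Fin 3) A) :
    Matrix (Fin 3 × Fin 3) (Fin 3 × Fin 3) A :=
  fun x y => if x.2 = y.2 then T x.1 y.1 else 0

/-- `T₂ = I₃ ⊗ T` over the algebra `A`. -/
def T2 {A : Type*} [Ring A] (T : Matrix (Fin 3) (Fin 3) A) :
    Matrix (Fin 3 × Fin 3) (Fin 3 × Fin 3) A :=
  fun x y => if x.1 = y.1 then T x.2 y.2 else 0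

@[simp] lemma rh0 (ap am bp bm cp cm : ℝ) : RhatP ap am bp bm cp cm (0,0) (0,0) = ap := rfl
@[simp] lemma rh1 (ap am bp bm cp cm : ℝ) : RhatP ap am bp bm cp cm (0,0) 0 = ap := rfl
@[simp] lemma rh2 (ap am bp bm cp cm : ℝ) : RhatP ap am bp bm cp cm 0 (0,0) = ap := rfl
@[simp] lemma rh3 (ap am bp bm cp cm : ℝ) : RhatP ap am bp bm cp cm 0 0 = ap := rfl
@[simp] lemma rh4 (ap am bp bm cp cm : ℝ) : RhatP ap am bp bm cp cm (0,0) (0,1) = 0 := rfl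
@[simp] lemma rh5 (ap am bp bm cp cm : ℝ) : RhatP ap am bp bm cp cm 0 (0,1) = 0 := rfl
@[simp] lemma rh6 (ap am bp bm cp cm : ℝ) : RhatP ap am bp bm cp cm (0,0) (0,2) = 0 := rfl
@[simp] lemma rh7 (ap am bp bm cp cm : ℝ) : RhatP ap am bp bm cp cm 0 (0,2) = 0 := rfl
@[simp] lemma rh8 (ap am bp bm cp cm : ℝ) : RhatP ap am bp bm cp cm (0,0) (1,0) = 0 := rfl
@[simp] lemma rh9 (ap am bp bm cp cm : ℝ) : RhatP ap am bp bm cp cm 0 (1,0) = 0 := rfl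
@[simp] lemma rh10 (ap am bp bm cp cm : ℝ) : RhatP ap am bp bm cp cm (0,0) (1,1) = 0 := rfl
@[simp] lemma rh11 (ap am bp bm cp cm : ℝ) : RhatP ap am bp bm cp cm (0,0) 1 = 0 := rfl
@[simp] lemma rh12 (ap am bp bm cp cm : ℝ) : RhatP ap am bp bm cp cm 0 (1,1) = 0 := rfl
@[simp] lemma rh13 (ap am bp bm cp cm : ℝ) : RhatP ap am bp bm cp cm 0 1 = 0 := rfl
@[simp] lemma rh14 (ap am bp bm cp cm : ℝ) : RhatP ap am bp bm cp cm (0,0) (1,2) = 0 := rfl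
@[simp] lemma rh15 (ap am bp bm cp cm : ℝ) : RhatP ap am bp bm cp cm 0 (1,2) = 0 := rfl
@[simp] lemma rh16 (ap am bp bm cp cm : ℝ) : RhatP ap am bp bm cp cm (0,0) (2,0) = 0 := rfl
@[simp] lemma rh17 (ap am bp bm cp cm : ℝ) : RhatP ap am bp bm cp cm 0 (2,0) = 0 := rfl
@[simp] lemma rh18 (ap am bp bm cp cm : ℝ) : RhatP ap am bp bm cp cm (0,0) (2,1) = 0 := rfl
@[simp] lemma rh19 (ap am bp bm cp cm : ℝ) : RhatP ap am bp bm cp cm 0 (2,1) = 0 := rfl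
@[simp] lemma rh20 (ap am bp bm cp cm : ℝ) : RhatP ap am bp bm cp cm (0,0) (2,2) = am := rfl
@[simp] lemma rh21 (ap am bp bm cp cm : ℝ) : RhatP ap am bp bm cp cm 0 (2,2) = am := rfl
@[simp] lemma rh22 (ap am bp bm cp cm : ℝ) : RhatP ap am bp bm cp cm (0,1) (0,0) = 0 := rfl
@[simp] lemma rh23 (ap am bp bm cp cm : ℝ) : RhatP ap am bp bm cp cm (0,1) 0 = 0 := rfl
@[simp] lemma rh24 (ap am bp bm cp cm : ℝ) : RhatP ap am bp bm cp cm (0,1) (0,1) = bp := rfl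
@[simp] lemma rh25 (ap am bp bm cp cm : ℝ) : RhatP ap am bp bm cp cm (0,1) (0,2) = 0 := rfl
@[simp] lemma rh26 (ap am bp bm cp cm : ℝ) : RhatP ap am bp bm cp cm (0,1) (1,0) = 0 := rfl
@[simp] lemma rh27 (ap am bp bm cp cm : ℝ) : RhatP ap am bp bm cp cm (0,1) (1,1) = 0 := rfl
@[simp] lemma rh28 (ap am bp bm cp cm : ℝ) : RhatP ap am bp bm cp cm (0,1) 1 = 0 := rfl
@[simp] lemma rh29 (ap am bp bm cp cm : ℝ) : RhatP ap am bp bm cp cm (0,1) (1,2) = 0 := rfl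
@[simp] lemma rh30 (ap am bp bm cp cm : ℝ) : RhatP ap am bp bm cp cm (0,1) (2,0) = 0 := rfl
@[simp] lemma rh31 (ap am bp bm cp cm : ℝ) : RhatP ap am bp bm cp cm (0,1) (2,1) = bm := rfl
@[simp] lemma rh32 (ap am bp bm cp cm : ℝ) : RhatP ap am bp bm cp cm (0,1) (2,2) = 0 := rfl
@[simp] lemma rh33 (ap am bp bm cp cm : ℝ) : RhatP ap am bp bm cp cm (0,2) (0,0) = 0 := rfl
@[simp] lemma rh34 (ap am bp bm cp cm : ℝ) : RhatP ap am bp bm cp cm (0,2) 0 = 0 := rfl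
@[simp] lemma rh35 (ap am bp bm cp cm : ℝ) : RhatP ap am bp bm cp cm (0,2) (0,1) = 0 := rfl
@[simp] lemma rh36 (ap am bp bm cp cm : ℝ) : RhatP ap am bp bm cp cm (0,2) (0,2) = ap := rfl
@[simp] lemma rh37 (ap am bp bm cp cm : ℝ) : RhatP ap am bp bm cp cm (0,2) (1,0) = 0 := rfl
@[simp] lemma rh38 (ap am bp bm cp cm : ℝ) : RhatP ap am bp bm cp cm (0,2) (1,1) = 0 := rfl
@[simp] lemma rh39 (ap am bp bm cp cm : ℝ) : RhatP ap am bp bm cp cm (0,2) 1 = 0 := rfl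
@[simp] lemma rh40 (ap am bp bm cp cm : ℝ) : RhatP ap am bp bm cp cm (0,2) (1,2) = 0 := rfl
@[simp] lemma rh41 (ap am bp bm cp cm : ℝ) : RhatP ap am bp bm cp cm (0,2) (2,0) = am := rfl
@[simp] lemma rh42 (ap am bp bm cp cm : ℝ) : RhatP ap am bp bm cp cm (0,2) (2,1) = 0 := rfl
@[simp] lemma rh43 (ap am bp bm cp cm : ℝ) : RhatP ap am bp bm cp cm (0,2) (2,2) = 0 := rfl
@[simp] lemma rh44 (ap am bp bm cp cm : ℝ) : RhatP ap am bp bm cp cm (1,0) (0,0) = 0 := rfl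
@[simp] lemma rh45 (ap am bp bm cp cm : ℝ) : RhatP ap am bp bm cp cm (1,0) 0 = 0 := rfl
@[simp] lemma rh46 (ap am bp bm cp cm : ℝ) : RhatP ap am bp bm cp cm (1,0) (0,1) = 0 := rfl
@[simp] lemma rh47 (ap am bp bm cp cm : ℝ) : RhatP ap am bp bm cp cm (1,0) (0,2) = 0 := rfl
@[simp] lemma rh48 (ap am bp bm cp cm : ℝ) : RhatP ap am bp bm cp cm (1,0) (1,0) = cp := rfl
@[simp] lemma rh49 (ap am bp bm cp cm : ℝ) : RhatP ap am bp bm cp cm (1,0) (1,1) = 0 := rfl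
@[simp] lemma rh50 (ap am bp bm cp cm : ℝ) : RhatP ap am bp bm cp cm (1,0) 1 = 0 := rfl
@[simp] lemma rh51 (ap am bp bm cp cm : ℝ) : RhatP ap am bp bm cp cm (1,0) (1,2) = cm := rfl
@[simp] lemma rh52 (ap am bp bm cp cm : ℝ) : RhatP ap am bp bm cp cm (1,0) (2,0) = 0 := rfl
@[simp] lemma rh53 (ap am bp bm cp cm : ℝ) : RhatP ap am bp bm cp cm (1,0) (2,1) = 0 := rfl
@[simp] lemma rh54 (ap am bp bm cp cm : ℝ) : RhatP ap am bp bm cp cm (1,0) (2,2) = 0 := rfl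
@[simp] lemma rh55 (ap am bp bm cp cm : ℝ) : RhatP ap am bp bm cp cm (1,1) (0,0) = 0 := rfl
@[simp] lemma rh56 (ap am bp bm cp cm : ℝ) : RhatP ap am bp bm cp cm (1,1) 0 = 0 := rfl
@[simp] lemma rh57 (ap am bp bm cp cm : ℝ) : RhatP ap am bp bm cp cm 1 (0,0) = 0 := rfl
@[simp] lemma rh58 (ap am bp bm cp cm : ℝ) : RhatP ap am bp bm cp cm 1 0 = 0 := rfl
@[simp] lemma rh59 (ap am bp bm cp cm : ℝ) : RhatP ap am bp bm cp cm (1,1) (0,1) = 0 := rfl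
@[simp] lemma rh60 (ap am bp bm cp cm : ℝ) : RhatP ap am bp bm cp cm 1 (0,1) = 0 := rfl
@[simp] lemma rh61 (ap am bp bm cp cm : ℝ) : RhatP ap am bp bm cp cm (1,1) (0,2) = 0 := rfl
@[simp] lemma rh62 (ap am bp bm cp cm : ℝ) : RhatP ap am bp bm cp cm 1 (0,2) = 0 := rfl
@[simp] lemma rh63 (ap am bp bm cp cm : ℝ) : RhatP ap am bp bm cp cm (1,1) (1,0) = 0 := rfl
@[simp] lemma rh64 (ap am bp bm cp cm : ℝ) : RhatP ap am bp bm cp cm 1 (1,0) = 0 := rfl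
@[simp] lemma rh65 (ap am bp bm cp cm : ℝ) : RhatP ap am bp bm cp cm (1,1) (1,1) = 1 := rfl
@[simp] lemma rh66 (ap am bp bm cp cm : ℝ) : RhatP ap am bp bm cp cm (1,1) 1 = 1 := rfl
@[simp] lemma rh67 (ap am bp bm cp cm : ℝ) : RhatP ap am bp bm cp cm 1 (1,1) = 1 := rfl
@[simp] lemma rh68 (ap am bp bm cp cm : ℝ) : RhatP ap am bp bm cp cm 1 1 = 1 := rfl
@[simp] lemma rh69 (ap am bp bm cp cm : ℝ) : RhatP ap am bp bm cp cm (1,1) (1,2) = 0 := rfl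
@[simp] lemma rh70 (ap am bp bm cp cm : ℝ) : RhatP ap am bp bm cp cm 1 (1,2) = 0 := rfl
@[simp] lemma rh71 (ap am bp bm cp cm : ℝ) : RhatP ap am bp bm cp cm (1,1) (2,0) = 0 := rfl
@[simp] lemma rh72 (ap am bp bm cp cm : ℝ) : RhatP ap am bp bm cp cm 1 (2,0) = 0 := rfl
@[simp] lemma rh73 (ap am bp bm cp cm : ℝ) : RhatP ap am bp bm cp cm (1,1) (2,1) = 0 := rfl
@[simp] lemma rh74 (ap am bp bm cp cm : ℝ) : RhatP ap am bp bm cp cm 1 (2,1) = 0 := rfl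
@[simp] lemma rh75 (ap am bp bm cp cm : ℝ) : RhatP ap am bp bm cp cm (1,1) (2,2) = 0 := rfl
@[simp] lemma rh76 (ap am bp bm cp cm : ℝ) : RhatP ap am bp bm cp cm 1 (2,2) = 0 := rfl
@[simp] lemma rh77 (ap am bp bm cp cm : ℝ) : RhatP ap am bp bm cp cm (1,2) (0,0) = 0 := rfl
@[simp] lemma rh78 (ap am bp bm cp cm : ℝ) : RhatP ap am bp bm cp cm (1,2) 0 = 0 := rfl
@[simp] lemma rh79 (ap am bp bm cp cm : ℝ) : RhatP ap am bp bm cp cm (1,2) (0,1) = 0 := rfl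
@[simp] lemma rh80 (ap am bp bm cp cm : ℝ) : RhatP ap am bp bm cp cm (1,2) (0,2) = 0 := rfl
@[simp] lemma rh81 (ap am bp bm cp cm : ℝ) : RhatP ap am bp bm cp cm (1,2) (1,0) = cm := rfl
@[simp] lemma rh82 (ap am bp bm cp cm : ℝ) : RhatP ap am bp bm cp cm (1,2) (1,1) = 0 := rfl
@[simp] lemma rh83 (ap am bp bm cp cm : ℝ) : RhatP ap am bp bm cp cm (1,2) 1 = 0 := rfl
@[simp] lemma rh84 (ap am bp bm cp cm : ℝ) : RhatP ap am bp bm cp cm (1,2) (1,2) = cp := rfl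
@[simp] lemma rh85 (ap am bp bm cp cm : ℝ) : RhatP ap am bp bm cp cm (1,2) (2,0) = 0 := rfl
@[simp] lemma rh86 (ap am bp bm cp cm : ℝ) : RhatP ap am bp bm cp cm (1,2) (2,1) = 0 := rfl
@[simp] lemma rh87 (ap am bp bm cp cm : ℝ) : RhatP ap am bp bm cp cm (1,2) (2,2) = 0 := rfl
@[simp] lemma rh88 (ap am bp bm cp cm : ℝ) : RhatP ap am bp bm cp cm (2,0) (0,0) = 0 := rfl
@[simp] lemma rh89 (ap am bp bm cp cm : ℝ) : RhatP ap am bp bm cp cm (2,0) 0 = 0 := rfl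
@[simp] lemma rh90 (ap am bp bm cp cm : ℝ) : RhatP ap am bp bm cp cm (2,0) (0,1) = 0 := rfl
@[simp] lemma rh91 (ap am bp bm cp cm : ℝ) : RhatP ap am bp bm cp cm (2,0) (0,2) = am := rfl
@[simp] lemma rh92 (ap am bp bm cp cm : ℝ) : RhatP ap am bp bm cp cm (2,0) (1,0) = 0 := rfl
@[simp] lemma rh93 (ap am bp bm cp cm : ℝ) : RhatP ap am bp bm cp cm (2,0) (1,1) = 0 := rfl
@[simp] lemma rh94 (ap am bp bm cp cm : ℝ) : RhatP ap am bp bm cp cm (2,0) 1 = 0 := rfl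
@[simp] lemma rh95 (ap am bp bm cp cm : ℝ) : RhatP ap am bp bm cp cm (2,0) (1,2) = 0 := rfl
@[simp] lemma rh96 (ap am bp bm cp cm : ℝ) : RhatP ap am bp bm cp cm (2,0) (2,0) = ap := rfl
@[simp] lemma rh97 (ap am bp bm cp cm : ℝ) : RhatP ap am bp bm cp cm (2,0) (2,1) = 0 := rfl
@[simp] lemma rh98 (ap am bp bm cp cm : ℝ) : RhatP ap am bp bm cp cm (2,0) (2,2) = 0 := rfl
@[simp] lemma rh99 (ap am bp bm cp cm : ℝ) : RhatP ap am bp bm cp cm (2,1) (0,0) = 0 := rfl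
@[simp] lemma rh100 (ap am bp bm cp cm : ℝ) : RhatP ap am bp bm cp cm (2,1) 0 = 0 := rfl
@[simp] lemma rh101 (ap am bp bm cp cm : ℝ) : RhatP ap am bp bm cp cm (2,1) (0,1) = bm := rfl
@[simp] lemma rh102 (ap am bp bm cp cm : ℝ) : RhatP ap am bp bm cp cm (2,1) (0,2) = 0 := rfl
@[simp] lemma rh103 (ap am bp bm cp cm : ℝ) : RhatP ap am bp bm cp cm (2,1) (1,0) = 0 := rfl
@[simp] lemma rh104 (ap am bp bm cp cm : ℝ) : RhatP ap am bp bm cp cm (2,1) (1,1) = 0 := rfl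
@[simp] lemma rh105 (ap am bp bm cp cm : ℝ) : RhatP ap am bp bm cp cm (2,1) 1 = 0 := rfl
@[simp] lemma rh106 (ap am bp bm cp cm : ℝ) : RhatP ap am bp bm cp cm (2,1) (1,2) = 0 := rfl
@[simp] lemma rh107 (ap am bp bm cp cm : ℝ) : RhatP ap am bp bm cp cm (2,1) (2,0) = 0 := rfl
@[simp] lemma rh108 (ap am bp bm cp cm : ℝ) : RhatP ap am bp bm cp cm (2,1) (2,1) = bp := rfl
@[simp] lemma rh109 (ap am bp bm cp cm : ℝ) : RhatP ap am bp bm cp cm (2,1) (2,2) = 0 := rfl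
@[simp] lemma rh110 (ap am bp bm cp cm : ℝ) : RhatP ap am bp bm cp cm (2,2) (0,0) = am := rfl
@[simp] lemma rh111 (ap am bp bm cp cm : ℝ) : RhatP ap am bp bm cp cm (2,2) 0 = am := rfl
@[simp] lemma rh112 (ap am bp bm cp cm : ℝ) : RhatP ap am bp bm cp cm (2,2) (0,1) = 0 := rfl
@[simp] lemma rh113 (ap am bp bm cp cm : ℝ) : RhatP ap am bp bm cp cm (2,2) (0,2) = 0 := rfl
@[simp] lemma rh114 (ap am bp bm cp cm : ℝ) : RhatP ap am bp bm cp cm (2,2) (1,0) = 0 := rfl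
@[simp] lemma rh115 (ap am bp bm cp cm : ℝ) : RhatP ap am bp bm cp cm (2,2) (1,1) = 0 := rfl
@[simp] lemma rh116 (ap am bp bm cp cm : ℝ) : RhatP ap am bp bm cp cm (2,2) 1 = 0 := rfl
@[simp] lemma rh117 (ap am bp bm cp cm : ℝ) : RhatP ap am bp bm cp cm (2,2) (1,2) = 0 := rfl
@[simp] lemma rh118 (ap am bp bm cp cm : ℝ) : RhatP ap am bp bm cp cm (2,2) (2,0) = 0 := rfl
@[simp] lemma rh119 (ap am bp bm cp cm : ℝ) : RhatP ap am bp bm cp cm (2,2) (2,1) = 0 := rfl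
@[simp] lemma rh120 (ap am bp bm cp cm : ℝ) : RhatP ap am bp bm cp cm (2,2) (2,2) = ap := rfl
-- total 121

lemma Pmul (ap am bp bm cp cm : ℝ) (x y : Fin 3 × Fin 3) :
    (Pflip * RhatP ap am bp bm cp cm) x y = RhatP ap am bp bm cp cm (x.2, x.1) y := by
  rw [Matrix.mul_apply, Finset.sum_eq_single (x.2, x.1)]
  · simp [Pflip]
  · intro b _ hb
    simp only [Pflip]
    rw [if_neg, zero_mul]
    rintro ⟨h1, h2⟩
    exact hb (by rw [Prod.ext_iff]; exact ⟨h2.symm, h1.symm⟩)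
  · simp

lemma RmatA_apply (A : Type*) [Ring A] [Algebra ℝ A] (ap am bp bm cp cm : ℝ)
    (x y : Fin 3 × Fin 3) :
    RmatA A ap am bp bm cp cm x y = algebraMap ℝ A (RhatP ap am bp bm cp cm (x.2, x.1) y) := by
  rw [RmatA, Matrix.map_apply, Pmul]

lemma half_cancel {A : Type*} [Ring A] [Algebra ℝ A] {x y : A}
    (h : (2⁻¹:ℝ) • x + -((2⁻¹:ℝ) • y) = x) : x = -y := by
  have h2 := congrArg (fun z => (2:ℝ) • z) h
  simp only [smul_add, smul_neg, smul_smul] at h2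
  norm_num at h2
  rw [two_smul] at h2
  exact (add_left_cancel h2).symm

lemma half_cancel' {A : Type*} [Ring A] [Algebra ℝ A] {x y : A}
    (h : x = -((2⁻¹:ℝ) • y) + (2⁻¹:ℝ) • x) : x = -y :=
  half_cancel (by rw [add_comm]; exact h.symm)

/-- RTT relations in the case `a₊ = −a₋` imply `p² = −t²`, `pt = −tp`, `q² = −s²`,
`qs = −sq`; equivalently `p̃² = t̃² = q̃² = s̃² = 0`. -/
theorem stmt8 {A : Type*} [Ring A] [Algebra ℝ A] (k p l q r s m t n : A)
    (bm cm : ℝ) (hb : bm = 1/2 ∨ bm = -(1/2)) (hc : cm = 1/2 ∨ cm = -(1/2))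
    (hRTT : RmatA A (1/2) (-(1/2)) (1/2) bm (1/2) cm *
        T1 !![k,p,l;q,r,s;m,t,n] * T2 !![k,p,l;q,r,s;m,t,n] =
      T2 !![k,p,l;q,r,s;m,t,n] * T1 !![k,p,l;q,r,s;m,t,n] *
        RmatA A (1/2) (-(1/2)) (1/2) bm (1/2) cm) :
    (p * p = -(t * t) ∧ p * t = -(t * p) ∧ q * q = -(s * s) ∧ q * s = -(s * q)) ∧
    (((1/2 : ℝ) • (p + t)) * ((1/2 : ℝ) • (p + t)) = 0 ∧
     ((1/2 : ℝ) • (p - t)) * ((1/2 : ℝ) • (p - t)) = 0 ∧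
     ((1/2 : ℝ) • (q + s)) * ((1/2 : ℝ) • (q + s)) = 0 ∧
     ((1/2 : ℝ) • (q - s)) * ((1/2 : ℝ) • (q - s)) = 0) := by
  have h1 := congrFun (congrFun hRTT ((0,0) : Fin 3 × Fin 3)) ((1,1) : Fin 3 × Fin 3)
  have h2 := congrFun (congrFun hRTT ((0,2) : Fin 3 × Fin 3)) ((1,1) : Fin 3 × Fin 3)
  have h3 := congrFun (congrFun hRTT ((1,1) : Fin 3 × Fin 3)) ((0,0) : Fin 3 × Fin 3)
  have h4 := congrFun (congrFun hRTT ((1,1) : Fin 3 × Fin 3)) ((0,2) : Fin 3 × Fin 3)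
  simp only [Matrix.mul_apply, Fintype.sum_prod_type, Fin.sum_univ_three, RmatA_apply,
    T1, T2] at h1 h2 h3 h4
  simp (config := { decide := true }) [Matrix.cons_val_zero, Matrix.cons_val_one,
    Matrix.head_cons] at h1 h2 h3 h4
  rw [mul_assoc, mul_assoc, ← Algebra.smul_def, ← Algebra.smul_def] at h1 h2
  rw [← Algebra.commutes, ← Algebra.commutes, ← Algebra.smul_def, ← Algebra.smul_def] at h3 h4
  have e1 : p * p = -(t * t) := half_cancel h1
  have e2' : t * p = -(p * t) := half_cancel h2
  have e2 : p * t = -(t * p) := by rw [e2', neg_neg]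
  have e3 : q * q = -(s * s) := half_cancel h3.symm
  have e4 : q * s = -(s * q) := half_cancel' h4
  have z1 : (p + t) * (p + t) = 0 := by rw [mul_add, add_mul, add_mul, e1, e2]; abel
  have z2 : (p - t) * (p - t) = 0 := by rw [mul_sub, sub_mul, sub_mul, e1, e2]; abel
  have z3 : (q + s) * (q + s) = 0 := by rw [mul_add, add_mul, add_mul, e3, e4]; abel
  have z4 : (q - s) * (q - s) = 0 := by rw [mul_sub, sub_mul, sub_mul, e3, e4]; abel
  refine ⟨⟨e1, e2, e3, e4⟩, ?_, ?_, ?_, ?_⟩ <;>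
    rw [smul_mul_assoc, mul_smul_comm] <;>
    first
      | rw [z1, smul_zero, smul_zero]
      | rw [z2, smul_zero, smul_zero]
      | rw [z3, smul_zero, smul_zero]
      | rw [z4, smul_zero, smul_zero]
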